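/- For all natural numbers n ≥ 1 and 1 ≤ k ≤ n and every real α with 0 < α < π, the k-th elementary symmetric function of the numbers cot((α + lπ)/n), 0 ≤ l ≤ n−1, satisfies: Σ_{0 ≤ l_1 < l_2 < ⋯ < l_k ≤ n−1} ∏_{j=1}^{k} cot((α + l_jπ)/n) equals C(n,k)·(−1)^{k/2} if k is even, and equals cot α · C(n,k)·(−1)^{(k−1)/2} if k is odd, where C(n,k) is the binomial coefficient. -/

import Mathlib

set_option maxHeartbeats 2000000 in
open Polynomial Complex Finset in
theorem stmt_17 (n k : ℕ) (hn : 1 ≤ n) (hk1 : 1 ≤ k) (hkn : k ≤ n)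
    (α : ℝ) (hα0 : 0 < α) (hαπ : α < Real.pi) :
    ∑ s ∈ Finset.powersetCard k (Finset.range n),
        ∏ l ∈ s, Real.cot ((α + l * Real.pi) / n) =
      if Even k then (n.choose k : ℝ) * (-1 : ℝ) ^ (k / 2)
      else Real.cot α * (n.choose k : ℝ) * (-1 : ℝ) ^ ((k - 1) / 2) := by
  have pi_pos := Real.pi_pos
  have hn0 : (n : ℝ) ≠ 0 := Nat.cast_ne_zero.2 (by omega)
  set θ : ℕ → ℝ := fun l => (α + l * Real.pi) / n with hθ
  set x : ℕ → ℝ := fun l => Real.cot (θ l) with hxdef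
  -- θ l in (0, π) for l < n
  have hθmem : ∀ l < n, 0 < θ l ∧ θ l < Real.pi := by
    intro l hl
    have hl' : (l : ℝ) ≤ (n : ℝ) - 1 := by
      have : (l : ℝ) + 1 ≤ n := by exact_mod_cast Nat.succ_le_of_lt hl
      linarith
    refine ⟨div_pos (by positivity) (by positivity), ?_⟩
    rw [div_lt_iff₀ (by positivity)]
    nlinarith [mul_le_mul_of_nonneg_right hl' pi_pos.le]
  have hsinθ : ∀ l < n, Real.sin (θ l) ≠ 0 := fun l hl =>
    (Real.sin_pos_of_pos_of_lt_pi (hθmem l hl).1 (hθmem l hl).2).ne'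
  have hsinα : Real.sin α ≠ 0 := (Real.sin_pos_of_pos_of_lt_pi hα0 hαπ).ne'
  -- cot = tan of complement
  have hcot : ∀ y : ℝ, Real.cot y = Real.tan (Real.pi / 2 - y) := by
    intro y
    rw [Real.cot_eq_cos_div_sin, Real.tan_eq_sin_div_cos, Real.sin_pi_div_two_sub,
      Real.cos_pi_div_two_sub]
  -- x injective on range n
  have hθinj : ∀ l₁ < n, ∀ l₂ < n, x l₁ = x l₂ → l₁ = l₂ := by
    intro l₁ h₁ l₂ h₂ hx
    have e₁ := hθmem l₁ h₁
    have e₂ := hθmem l₂ h₂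
    rw [hxdef] at hx
    simp only [hcot] at hx
    have := Real.tan_inj_of_lt_of_lt_pi_div_two (by linarith [e₁.2]) (by linarith [e₁.1])
      (by linarith [e₂.2]) (by linarith [e₂.1]) hx
    have : θ l₁ = θ l₂ := by linarith
    rw [hθ] at this
    field_simp at this
    exact_mod_cast mul_right_cancel₀ (ne_of_gt pi_pos) (by linear_combination this : (l₁ : ℝ) * Real.pi = l₂ * Real.pi)
  -- complex roots
  set z : ℕ → ℂ := fun l => ((x l : ℝ) : ℂ) with hzdef
  have hE : Complex.exp (α * I) - Complex.exp (-(α * I)) = 2 * I * (Real.sin α : ℂ) := by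
    rw [Complex.ofReal_sin, Complex.sin, neg_mul]
    linear_combination (Complex.exp (↑α * I) - Complex.exp (-(↑α * I))) * Complex.I_sq
  have hsinαC : (Real.sin α : ℂ) ≠ 0 := Complex.ofReal_ne_zero.2 hsinα
  set c : ℂ := 1 / (2 * I * (Real.sin α : ℂ)) with hc
  set Q : ℂ[X] := C c * (C (Complex.exp (α * I)) * (X - C I) ^ n
      - C (Complex.exp (-(α * I))) * (X + C I) ^ n) with hQ
  set P : ℂ[X] := ∏ l ∈ Finset.range n, (X - C (z l)) with hP
  have hPmonic : P.Monic := monic_prod_of_monic _ _ fun _ _ => monic_X_sub_C _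
  have hPdeg : P.natDegree = n := by
    rw [hP, natDegree_prod _ _ fun _ _ => X_sub_C_ne_zero _]
    simp
  -- coefficients of Q
  have hQcoeff : ∀ m, Q.coeff m = c * ((n.choose m : ℂ) *
      (Complex.exp (α * I) * (-I) ^ (n - m) - Complex.exp (-(α * I)) * I ^ (n - m))) := by
    intro m
    rw [hQ, (by rw [map_neg]; ring : X - C I = X + C (-I)), coeff_C_mul, coeff_sub,
      coeff_C_mul, coeff_C_mul, coeff_X_add_C_pow, coeff_X_add_C_pow]
    ring
  have hQn : Q.coeff n = 1 := by
    rw [hQcoeff n, Nat.sub_self]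
    simp only [pow_zero, mul_one, Nat.choose_self, Nat.cast_one, one_mul]
    rw [hE, hc]
    field_simp
  have hQdeg : Q.natDegree ≤ n := by
    rw [hQ]
    compute_degree
  have hcE : c * (Complex.exp (α * I) - Complex.exp (-(α * I))) = 1 := by
    rw [hE, hc]
    field_simp
  -- z l ± I as exponentials
  have hzpm : ∀ l < n, z l + I = Complex.exp (θ l * I) / (Real.sin (θ l) : ℂ) ∧
      z l - I = Complex.exp (-((θ l : ℂ) * I)) / (Real.sin (θ l) : ℂ) := by
    intro l hl
    have hs : ((Real.sin (θ l) : ℝ) : ℂ) ≠ 0 := Complex.ofReal_ne_zero.2 (hsinθ l hl)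
    have hx' : z l = (Real.cos (θ l) : ℂ) / (Real.sin (θ l) : ℂ) := by
      rw [hzdef]
      simp only [hxdef, Real.cot_eq_cos_div_sin]
      push_cast
      ring
    have hexp1 : Complex.exp ((θ l : ℂ) * I) = (Real.cos (θ l) : ℂ) + (Real.sin (θ l) : ℂ) * I := by
      rw [Complex.exp_mul_I, Complex.ofReal_cos, Complex.ofReal_sin]
    have hexp2 : Complex.exp (-((θ l : ℂ) * I))
        = (Real.cos (θ l) : ℂ) - (Real.sin (θ l) : ℂ) * I := by
      rw [show -((θ l : ℂ) * I) = ((-θ l : ℝ) : ℂ) * I by push_cast; ring, Complex.exp_mul_I,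
        ← Complex.ofReal_cos, ← Complex.ofReal_sin, Real.cos_neg, Real.sin_neg]
      push_cast
      ring
    have hs' : Complex.sin ((θ l : ℝ) : ℂ) ≠ 0 := by rw [← Complex.ofReal_sin]; exact hs
    constructor
    · rw [hx', hexp1]; field_simp [hs']
    · rw [hx', hexp2]; field_simp [hs']
  have hevalQ : ∀ l < n, Q.eval (z l) = 0 := by
    intro l hl
    have hs : ((Real.sin (θ l) : ℝ) : ℂ) ≠ 0 := Complex.ofReal_ne_zero.2 (hsinθ l hl)
    obtain ⟨hplus, hminus⟩ := hzpm l hl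
    have hnθ : ((n : ℝ) * θ l : ℝ) = α + l * Real.pi := by rw [hθ]; field_simp
    have hkey : Complex.exp ((n : ℂ) * ((θ l : ℂ) * I)) = Complex.exp (α * I) * (-1) ^ l := by
      rw [show (n : ℂ) * ((θ l : ℂ) * I) = (((n : ℝ) * θ l : ℝ) : ℂ) * I by push_cast; ring, hnθ,
        show ((α + l * Real.pi : ℝ) : ℂ) * I = (α : ℂ) * I + (l : ℕ) * ((Real.pi : ℂ) * I) by
          push_cast; ring,
        Complex.exp_add, Complex.exp_nat_mul, Complex.exp_pi_mul_I]
    have hv : ((-1 : ℂ) ^ l)⁻¹ = (-1 : ℂ) ^ l := by rw [← inv_pow, inv_neg, inv_one]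
    have e1 : Complex.exp ((θ l : ℂ) * I) ^ n = Complex.exp (α * I) * (-1) ^ l := by
      rw [← Complex.exp_nat_mul, hkey]
    have e2 : Complex.exp (-((θ l : ℂ) * I)) ^ n = (Complex.exp (α * I))⁻¹ * (-1) ^ l := by
      rw [← Complex.exp_nat_mul, show (n : ℂ) * -((θ l : ℂ) * I) = -((n : ℂ) * ((θ l : ℂ) * I)) by
        ring, Complex.exp_neg, hkey, mul_inv, hv]
    rw [hQ]
    simp only [eval_mul, eval_sub, eval_add, eval_pow, eval_X, eval_C]
    rw [hplus, hminus, div_pow, div_pow, e1, e2, Complex.exp_neg]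
    have he0 : Complex.exp ((α : ℂ) * I) ≠ 0 := Complex.exp_ne_zero _
    have hsn : ((Real.sin (θ l) : ℝ) : ℂ) ^ n ≠ 0 := pow_ne_zero _ hs
    field_simp
    rw [sub_self, mul_zero, mul_zero]
  -- Q = P
  have hPn : P.coeff n = 1 := by rw [← hPdeg]; exact hPmonic.coeff_natDegree
  have hQP : Q = P := by
    have hDdeg : (Q - P).natDegree < n := by
      rcases eq_or_ne (Q - P) 0 with h | h
      · rw [h]; simpa using (by omega : 0 < n)
      · refine lt_of_le_of_ne ((natDegree_sub_le _ _).trans (by simp [hQdeg, hPdeg])) fun hh => h ?_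
        apply leadingCoeff_eq_zero.mp
        rw [leadingCoeff, hh, coeff_sub, hQn, hPn, sub_self]
    have hzero : Q - P = 0 := by
      apply Polynomial.eq_zero_of_natDegree_lt_card_of_eval_eq_zero' (Q - P)
        ((Finset.range n).image z)
      · intro i hi
        simp only [Finset.mem_image, Finset.mem_range] at hi
        obtain ⟨l, hl, rfl⟩ := hi
        have hPe : P.eval (z l) = 0 := by
          rw [hP, eval_prod]
          apply Finset.prod_eq_zero (Finset.mem_range.2 hl)
          simp
        rw [eval_sub, hevalQ l hl, hPe, sub_zero]
      · rw [Finset.card_image_of_injOn, Finset.card_range]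
        · exact hDdeg
        · intro a ha b hb hab
          simp only [Finset.coe_range, Set.mem_Iio] at ha hb
          exact hθinj a ha b hb (Complex.ofReal_inj.mp hab)
    exact sub_eq_zero.mp hzero
  -- extract coefficient n - k
  have hPco : P.coeff (n - k)
      = (-1 : ℂ) ^ k * ∑ s ∈ Finset.powersetCard k (Finset.range n), ∏ l ∈ s, z l := by
    have hrw : P = (((Finset.range n).val.map z).map fun t => X - C t).prod := by
      rw [hP, Finset.prod, Multiset.map_map]
      rfl
    have hcard : Multiset.card ((Finset.range n).val.map z) = n := by
      rw [Multiset.card_map]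
      exact Finset.card_range n
    rw [hrw, Multiset.prod_X_sub_C_coeff _ (by rw [hcard]; omega), hcard,
      show n - (n - k) = k by omega, Finset.esymm_map_val]
  have hco : c * ((n.choose k : ℂ) *
        (Complex.exp (α * I) * (-I) ^ k - Complex.exp (-(α * I)) * I ^ k))
      = (-1 : ℂ) ^ k * ∑ s ∈ Finset.powersetCard k (Finset.range n), ∏ l ∈ s, z l := by
    have := congrArg (fun p : ℂ[X] => p.coeff (n - k)) hQP
    simp only [hQcoeff (n - k), hPco] at this
    rw [show n - (n - k) = k by omega, Nat.choose_symm hkn] at this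
    exact this
  have hES : ∑ s ∈ Finset.powersetCard k (Finset.range n), ∏ l ∈ s, z l
      = (-1 : ℂ) ^ k * (c * ((n.choose k : ℂ) *
        (Complex.exp (α * I) * (-I) ^ k - Complex.exp (-(α * I)) * I ^ k))) := by
    rw [hco, ← mul_assoc, ← pow_add, ← two_mul, pow_mul, neg_one_sq, one_pow, one_mul]
  have hcast : (↑(∑ s ∈ Finset.powersetCard k (Finset.range n),
      ∏ l ∈ s, Real.cot ((α + l * Real.pi) / n)) : ℂ)
      = ∑ s ∈ Finset.powersetCard k (Finset.range n), ∏ l ∈ s, z l := by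
    push_cast [hzdef, hxdef, hθ]
    rfl
  apply Complex.ofReal_inj.mp
  rw [hcast, hES]
  rcases Nat.even_or_odd k with he | ho
  · obtain ⟨m, hm⟩ := he
    rw [if_pos ⟨m, hm⟩]
    subst hm
    have hI : (I : ℂ) ^ (m + m) = (-1) ^ m := by
      rw [← two_mul, pow_mul, Complex.I_sq]
    have hmI : (-I : ℂ) ^ (m + m) = (-1) ^ m := by
      rw [← two_mul, pow_mul, neg_pow, Complex.I_sq]
      norm_num
    rw [hI, hmI, show (m + m) / 2 = m by omega]
    push_cast
    rw [← two_mul, pow_mul, neg_one_sq, one_pow, one_mul]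
    calc c * ((n.choose (2 * m) : ℂ) * (Complex.exp (↑α * I) * (-1) ^ m
          - Complex.exp (-(↑α * I)) * (-1) ^ m))
        = (n.choose (2 * m) : ℂ) * (-1) ^ m
          * (c * (Complex.exp (↑α * I) - Complex.exp (-(↑α * I)))) := by ring
      _ = (n.choose (2 * m) : ℂ) * (-1) ^ m := by rw [hcE, mul_one]
  · obtain ⟨m, hm⟩ := ho
    rw [if_neg (by simp [hm, parity_simps])]
    subst hm
    have hE2 : Complex.exp (α * I) + Complex.exp (-(α * I)) = 2 * (Real.cos α : ℂ) := by
      rw [Complex.ofReal_cos, Complex.cos, neg_mul]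
      ring
    have hI : (I : ℂ) ^ (2 * m + 1) = (-1) ^ m * I := by
      rw [pow_succ, pow_mul, Complex.I_sq]
    have hmI : (-I : ℂ) ^ (2 * m + 1) = -((-1) ^ m * I) := by
      rw [pow_succ, pow_mul, neg_pow, Complex.I_sq]
      norm_num
    rw [hI, hmI, show (2 * m + 1 - 1) / 2 = m by omega, show (-1 : ℂ) ^ (2 * m + 1) = -1 by
      rw [pow_succ, pow_mul, neg_one_sq, one_pow, one_mul],
      Real.cot_eq_cos_div_sin]
    push_cast
    have hsinC : Complex.sin (α : ℂ) ≠ 0 := by rw [← Complex.ofReal_sin]; exact hsinαC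
    have hE'' : Complex.exp (α * I) - Complex.exp (-(α * I)) = 2 * I * Complex.sin (α : ℂ) := by
      rw [← Complex.ofReal_sin]; exact hE
    have hE2'' : Complex.exp (α * I) + Complex.exp (-(α * I)) = 2 * Complex.cos (α : ℂ) := by
      rw [Complex.cos, neg_mul]; ring
    rw [hc, show ((Real.sin α : ℝ) : ℂ) = Complex.sin (α : ℂ) from Complex.ofReal_sin α]
    field_simp
    linear_combination (norm := ring_nf) (n.choose (2 * m + 1) : ℂ) * hE2''
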